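/- Let J¹_{[II]}, J²_{[II]}, J³_{[II]} be the 8×8 real matrices obtained as the coefficient matrices of β₁, β₂, β₃ in the matrix Σₓ βₓ J^x_{[II]} whose rows are: row1 = (0,0,0, 3β₁/2, -√3β₃/4, -3β₂/4, -√3β₂/4, 3β₃/4); row2 = (0,0, β₁/2, 0, -β₃/4, -3√3β₂/4, β₂/4, -3√3β₃/4); row3 = (0, -β₁/2, 0, 0, 5β₂/4, √3β₃/4, 5β₃/4, -√3β₂/4); row4 = (-3β₁/2, 0,0,0, -√3β₂/4, 3β₃/4, √3β₃/4, 3β₂/4); row5 = (√3β₃/4, β₃/4, -5β₂/4, √3β₂/4, 0, √3β₁/4, -5β₁/4, 0); row6 = (3β₂/4, 3√3β₂/4, -√3β₃/4, -3β₃/4, -√3β₁/4, 0, 0, -3β₁/4); row7 = (√3β₂/4, -β₂/4, -5β₃/4, -√3β₃/4, 5β₁/4, 0, 0, √3β₁/4); row8 = (-3β₃/4, 3√3β₃/4, √3β₂/4, -3β₂/4, 0, 3β₁/4, -√3β₁/4, 0). Then each J^x_{[II]} is antisymmetric, they satisfy the su(2) commutation relations [J¹_{[II]}, J²_{[II]}]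 = J³_{[II]} (and cyclic), the Casimir is (J¹_{[II]})² + (J²_{[II]})² + (J³_{[II]})² = -(15/4)·1₈ (the spin-3/2 representation with multiplicity two), and moreover [J^x_{[I]}, J^y_{[II]}] = 0 for all x, y ∈ {1,2,3}, where J^x_{[I]} are the coefficient matrices of α₁, α₂, α₃ in the matrix with rows (0,0,0, -α₁/2, -√3α₃/4, -α₂/4, √3α₂/4, -α₃/4), (0,0, α₁/2, 0, -α₃/4, -√3α₂/4, -α₂/4, √3α₃/4), (0, -α₁/2, 0, 0, -α₂/4, √3α₃/4, α₃/4, √3α₂/4), (α₁/2, 0,0,0, √3α₂/4, -α₃/4, √3α₃/4, α₂/4), (√3α₃/4, α₃/4, α₂/4, -√3α₂/4, 0, √3α₁/4, -α₁/4, 0), (α₂/4, √3α₂/4, -√3α₃/4, α₃/4, -√3α₁/4, 0, 0, α₁/4), (-√3α₂/4, α₂/4, -α₃/4, -√3α₃/4, α₁/4, 0, 0, √3α₁/4), (α₃/4, -√3α₃/4, -√3α₂/4, -α₂/4, 0, -α₁/4, -√3α₁/4, 0). -/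
import Mathlib


noncomputable section

open Matrix

/-- The 8×8 matrix `Σₓ αₓ J^x_{[I]}` from the holonomy algebra of
`G_{2(2)}/(SU(2)×SU(2))`. -/
def JfamI (a1 a2 a3 : ℝ) : Matrix (Fin 8) (Fin 8) ℝ :=
  let s := Real.sqrt 3
  !![0, 0, 0, -a1/2, -s*a3/4, -a2/4, s*a2/4, -a3/4;
     0, 0, a1/2, 0, -a3/4, -s*a2/4, -a2/4, s*a3/4;
     0, -a1/2, 0, 0, -a2/4, s*a3/4, a3/4, s*a2/4;
     a1/2, 0, 0, 0, s*a2/4, -a3/4, s*a3/4, a2/4;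
     s*a3/4, a3/4, a2/4, -s*a2/4, 0, s*a1/4, -a1/4, 0;
     a2/4, s*a2/4, -s*a3/4, a3/4, -s*a1/4, 0, 0, a1/4;
     -s*a2/4, a2/4, -a3/4, -s*a3/4, a1/4, 0, 0, s*a1/4;
     a3/4, -s*a3/4, -s*a2/4, -a2/4, 0, -a1/4, -s*a1/4, 0]

/-- The 8×8 matrix `Σₓ βₓ J^x_{[II]}` from the holonomy algebra of
`G_{2(2)}/(SU(2)×SU(2))`. -/
def JfamII (b1 b2 b3 : ℝ) : Matrix (Fin 8) (Fin 8) ℝ :=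
  let s := Real.sqrt 3
  !![0, 0, 0, 3*b1/2, -s*b3/4, -3*b2/4, -s*b2/4, 3*b3/4;
     0, 0, b1/2, 0, -b3/4, -3*s*b2/4, b2/4, -3*s*b3/4;
     0, -b1/2, 0, 0, 5*b2/4, s*b3/4, 5*b3/4, -s*b2/4;
     -3*b1/2, 0, 0, 0, -s*b2/4, 3*b3/4, s*b3/4, 3*b2/4;
     s*b3/4, b3/4, -5*b2/4, s*b2/4, 0, s*b1/4, -5*b1/4, 0;
     3*b2/4, 3*s*b2/4, -s*b3/4, -3*b3/4, -s*b1/4, 0, 0, -3*b1/4;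
     s*b2/4, -b2/4, -5*b3/4, -s*b3/4, 5*b1/4, 0, 0, s*b1/4;
     -3*b3/4, 3*s*b3/4, s*b2/4, -3*b2/4, 0, 3*b1/4, -s*b1/4, 0]


namespace Stmt7Aux

open Matrix

lemma cv5 (x : ℝ) (u : Fin 7 → ℝ) : vecCons x u (5 : Fin 8) = u 4 := rfl
lemma cv6 (x : ℝ) (u : Fin 7 → ℝ) : vecCons x u (6 : Fin 8) = u 5 := rfl
lemma cv7 (x : ℝ) (u : Fin 7 → ℝ) : vecCons x u (7 : Fin 8) = u 6 := rfl
lemma cv5' (x : ℝ) (u : Fin 6 → ℝ) : vecCons x u (5 : Fin 7) = u 4 := rfl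
lemma cv6' (x : ℝ) (u : Fin 6 → ℝ) : vecCons x u (6 : Fin 7) = u 5 := rfl
lemma cv5'' (x : ℝ) (u : Fin 5 → ℝ) : vecCons x u (5 : Fin 6) = u 4 := rfl

set_option maxHeartbeats 2000000 in
lemma II_antisym (b1 b2 b3 : ℝ) : (JfamII b1 b2 b3)ᵀ = -(JfamII b1 b2 b3) := by
  rw [← Matrix.ext_iff]
  simp only [Fin.forall_fin_succ, Fin.forall_fin_one, IsEmpty.forall_iff, and_true, true_and]
  simp only [JfamII, Matrix.transpose_apply, Matrix.neg_apply,
    Matrix.cons_val_zero, Matrix.cons_val_succ, Fin.succ_zero_eq_one,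
    Matrix.cons_val', Matrix.cons_val_one, Matrix.head_cons, Matrix.empty_val',
    Matrix.cons_val_fin_one, Matrix.head_fin_const, Matrix.of_apply,
    Matrix.cons_val_two, Matrix.cons_val_three, Matrix.cons_val_four,
    Matrix.vecTail, Matrix.vecHead, Function.comp, cv5, cv6, cv7, cv5', cv6', cv5'']
  constructorm* _ ∧ _ <;> first
    | exact fun _ => True.intro
    | ring

set_option maxHeartbeats 2000000 in
lemma II_bracket (b1 b2 b3 c1 c2 c3 : ℝ) :
    (JfamII b1 b2 b3) * (JfamII c1 c2 c3) - (JfamII c1 c2 c3) * (JfamII b1 b2 b3)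
      = JfamII (b2*c3-b3*c2) (b3*c1-b1*c3) (b1*c2-b2*c1) := by
  have hs2 : Real.sqrt 3 ^ 2 = 3 := Real.sq_sqrt (by norm_num)
  rw [← Matrix.ext_iff]
  simp only [Fin.forall_fin_succ, Fin.forall_fin_one, IsEmpty.forall_iff, and_true, true_and]
  simp only [JfamII, Matrix.sub_apply, Matrix.mul_apply, Fin.sum_univ_eight,
    Matrix.cons_val_zero, Matrix.cons_val_succ, Fin.succ_zero_eq_one,
    Matrix.cons_val', Matrix.cons_val_one, Matrix.head_cons, Matrix.empty_val',
    Matrix.cons_val_fin_one, Matrix.head_fin_const, Matrix.of_apply,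
    Matrix.cons_val_two, Matrix.cons_val_three, Matrix.cons_val_four,
    Matrix.vecTail, Matrix.vecHead, Function.comp, cv5, cv6, cv7, cv5', cv6', cv5'']
  constructorm* _ ∧ _ <;> first
    | exact fun _ => True.intro
    | (ring_nf; try simp only [hs2]; try ring_nf)

set_option maxHeartbeats 4000000 in
lemma II_casimir :
    JfamII 1 0 0 * JfamII 1 0 0 + JfamII 0 1 0 * JfamII 0 1 0 + JfamII 0 0 1 * JfamII 0 0 1
      = -((15/4 : ℝ) • (1 : Matrix (Fin 8) (Fin 8) ℝ)) := by
  have hs2 : Real.sqrt 3 ^ 2 = 3 := Real.sq_sqrt (by norm_num)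
  rw [← Matrix.ext_iff]
  simp only [Fin.forall_fin_succ, Fin.forall_fin_one, IsEmpty.forall_iff, and_true, true_and]
  simp only [JfamII, Matrix.add_apply, Matrix.mul_apply, Fin.sum_univ_eight,
    Matrix.neg_apply, Matrix.smul_apply, Matrix.one_apply, smul_eq_mul,
    Matrix.cons_val_zero, Matrix.cons_val_succ, Fin.succ_zero_eq_one,
    Matrix.cons_val', Matrix.cons_val_one, Matrix.head_cons, Matrix.empty_val',
    Matrix.cons_val_fin_one, Matrix.head_fin_const, Matrix.of_apply,
    Matrix.cons_val_two, Matrix.cons_val_three, Matrix.cons_val_four,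
    Matrix.vecTail, Matrix.vecHead, Function.comp, cv5, cv6, cv7, cv5', cv6', cv5'']
  norm_num
  constructorm* _ ∧ _ <;> first
    | exact fun _ => True.intro
    | decide
    | (rw [if_neg (by decide)]; ring)
    | (ring_nf; try simp only [hs2]; try ring_nf)

set_option maxHeartbeats 4000000 in
lemma I_II_comm (a1 a2 a3 b1 b2 b3 : ℝ) :
    (JfamI a1 a2 a3) * (JfamII b1 b2 b3) = (JfamII b1 b2 b3) * (JfamI a1 a2 a3) := by
  have hs2 : Real.sqrt 3 ^ 2 = 3 := Real.sq_sqrt (by norm_num)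
  rw [← Matrix.ext_iff]
  simp only [Fin.forall_fin_succ, Fin.forall_fin_one, IsEmpty.forall_iff, and_true, true_and]
  simp only [JfamI, JfamII, Matrix.mul_apply, Fin.sum_univ_eight,
    Matrix.cons_val_zero, Matrix.cons_val_succ, Fin.succ_zero_eq_one,
    Matrix.cons_val', Matrix.cons_val_one, Matrix.head_cons, Matrix.empty_val',
    Matrix.cons_val_fin_one, Matrix.head_fin_const, Matrix.of_apply,
    Matrix.cons_val_two, Matrix.cons_val_three, Matrix.cons_val_four,
    Matrix.vecTail, Matrix.vecHead, Function.comp, cv5, cv6, cv7, cv5', cv6', cv5'']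
  constructorm* _ ∧ _ <;> first
    | exact fun _ => True.intro
    | (ring_nf; try simp only [hs2]; try ring_nf)

end Stmt7Aux
/-- the coefficient matrices `J^x_{[II]}` of `β₁, β₂, β₃` in
`Σₓ βₓ J^x_{[II]}` are antisymmetric, satisfy the `su(2)` commutation relations,
have Casimir `-(15/4)·1₈`, and commute with the coefficient matrices `J^x_{[I]}`
of `α₁, α₂, α₃` in `Σₓ αₓ J^x_{[I]}`. -/
theorem stmt_7 (J1 J2 J3 K1 K2 K3 : Matrix (Fin 8) (Fin 8) ℝ)
    (hJ : ∀ a1 a2 a3 : ℝ, a1 • J1 + a2 • J2 + a3 • J3 = JfamI a1 a2 a3)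
    (hK : ∀ b1 b2 b3 : ℝ, b1 • K1 + b2 • K2 + b3 • K3 = JfamII b1 b2 b3) :
    (K1ᵀ = -K1 ∧ K2ᵀ = -K2 ∧ K3ᵀ = -K3) ∧
    (K1 * K2 - K2 * K1 = K3 ∧ K2 * K3 - K3 * K2 = K1 ∧ K3 * K1 - K1 * K3 = K2) ∧
    K1 * K1 + K2 * K2 + K3 * K3 = -((15/4 : ℝ) • (1 : Matrix (Fin 8) (Fin 8) ℝ)) ∧
    (∀ x y : Fin 3, ![J1, J2, J3] x * ![K1, K2, K3] y = ![K1, K2, K3] y * ![J1, J2, J3] x) := by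
  have hK1 : K1 = JfamII 1 0 0 := by have h := hK 1 0 0; simpa using h
  have hK2 : K2 = JfamII 0 1 0 := by have h := hK 0 1 0; simpa using h
  have hK3 : K3 = JfamII 0 0 1 := by have h := hK 0 0 1; simpa using h
  have hJ1 : J1 = JfamI 1 0 0 := by have h := hJ 1 0 0; simpa using h
  have hJ2 : J2 = JfamI 0 1 0 := by have h := hJ 0 1 0; simpa using h
  have hJ3 : J3 = JfamI 0 0 1 := by have h := hJ 0 0 1; simpa using h
  refine ⟨⟨?_, ?_, ?_⟩, ⟨?_, ?_, ?_⟩, ?_, ?_⟩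
  · rw [hK1]; exact Stmt7Aux.II_antisym 1 0 0
  · rw [hK2]; exact Stmt7Aux.II_antisym 0 1 0
  · rw [hK3]; exact Stmt7Aux.II_antisym 0 0 1
  · rw [hK1, hK2, hK3]
    have h := Stmt7Aux.II_bracket 1 0 0 0 1 0; norm_num at h; exact h
  · rw [hK1, hK2, hK3]
    have h := Stmt7Aux.II_bracket 0 1 0 0 0 1; norm_num at h; exact h
  · rw [hK1, hK2, hK3]
    have h := Stmt7Aux.II_bracket 0 0 1 1 0 0; norm_num at h; exact h
  · rw [hK1, hK2, hK3]; exact Stmt7Aux.II_casimir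
  · intro x y
    fin_cases x <;> fin_cases y <;>
      simp only [Matrix.cons_val_zero, Matrix.cons_val_one, Matrix.head_cons,
        Matrix.cons_val_two, Matrix.tail_cons, hJ1, hJ2, hJ3, hK1, hK2, hK3] <;>
      apply Stmt7Aux.I_II_comm

end
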